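/- For all λ ∈ [0,1] and all vectors v, v' ∈ ℝ^d, if v Pareto dominates v', then v λ-Lorenz dominates v'. -/

import Mathlib

/-- The vector `v` sorted in increasing order. -/
noncomputable def sortVec {d : ℕ} (v : Fin d → ℝ) : Fin d → ℝ := v ∘ Tuple.sort v

/-- The Lorenz vector of `v`: cumulative sums of the sorted vector. -/
noncomputable def lorenzVec {d : ℕ} (v : Fin d → ℝ) : Fin d → ℝ :=
  fun k => ∑ i ∈ Finset.Iic k, sortVec v i

/-- Pareto dominance: componentwise at least, and not equal. -/
def ParetoDom {d : ℕ} (u w : Fin d → ℝ) : Prop :=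
  (∀ j, w j ≤ u j) ∧ u ≠ w

/-- Lorenz dominance. -/
def LorenzDom {d : ℕ} (v v' : Fin d → ℝ) : Prop :=
  ParetoDom (lorenzVec v) (lorenzVec v')

/-- λ-Lorenz dominance. -/
def LambdaLorenzDom {d : ℕ} (l : ℝ) (v v' : Fin d → ℝ) : Prop :=
  ParetoDom (fun k => l * sortVec v k + (1 - l) * lorenzVec v k)
            (fun k => l * sortVec v' k + (1 - l) * lorenzVec v' k)

lemma sortVec_mono {d : ℕ} {v v' : Fin d → ℝ} (h : ∀ j, v' j ≤ v j) (k : Fin d) :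
    sortVec v' k ≤ sortVec v k := by
  classical
  set a := (v ∘ Tuple.sort v) k with ha
  have h1 : (k : ℕ) < Fintype.card {i // (v ∘ Tuple.sort v) i ≤ a} :=
    by rw [Fintype.card_subtype]; exact (Tuple.lt_card_le_iff_apply_le_of_monotone (j := k) (a := a) (Tuple.monotone_sort v)).2 le_rfl
  have e : {i // (v ∘ Tuple.sort v) i ≤ a} ≃ {j // v j ≤ a} :=
    (Tuple.sort v).subtypeEquiv (fun i => Iff.rfl)
  have e' : {i // (v' ∘ Tuple.sort v') i ≤ a} ≃ {j // v' j ≤ a} :=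
    (Tuple.sort v').subtypeEquiv (fun i => Iff.rfl)
  have h2 : Fintype.card {j // v j ≤ a} ≤ Fintype.card {j // v' j ≤ a} :=
    Fintype.card_subtype_mono _ _ (fun j hj => le_trans (h j) hj)
  have h3 : (k : ℕ) < Fintype.card {i // (v' ∘ Tuple.sort v') i ≤ a} := by
    rw [Fintype.card_congr e']
    calc (k : ℕ) < Fintype.card {i // (v ∘ Tuple.sort v) i ≤ a} := h1
    _ = Fintype.card {j // v j ≤ a} := Fintype.card_congr e
    _ ≤ _ := h2
  exact (Tuple.lt_card_le_iff_apply_le_of_monotone (j := k) (a := a) (Tuple.monotone_sort v')).1 (by rwa [Fintype.card_subtype] at h3)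

lemma sum_sortVec {d : ℕ} (v : Fin d → ℝ) : ∑ i, sortVec v i = ∑ i, v i :=
  Equiv.sum_comp (Tuple.sort v) v

theorem pareto_implies_lambdaLorenz {d : ℕ} (l : ℝ) (hl : l ∈ Set.Icc (0 : ℝ) 1)
    (v v' : Fin d → ℝ) (h : ParetoDom v v') : LambdaLorenzDom l v v' := by
  obtain ⟨hle, hne⟩ := h
  obtain ⟨hl0, hl1⟩ := hl
  have hσ : ∀ k, sortVec v' k ≤ sortVec v k := sortVec_mono hle
  have hL : ∀ k, lorenzVec v' k ≤ lorenzVec v k := fun k =>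
    Finset.sum_le_sum (fun i _ => hσ i)
  -- there is a strictly better coordinate
  obtain ⟨j, hj⟩ : ∃ j, v' j < v j := by
    by_contra hc
    push_neg at hc
    exact hne (funext fun j => le_antisymm (hc j) (hle j))
  have hsum : ∑ i, v' i < ∑ i, v i :=
    Finset.sum_lt_sum (fun i _ => hle i) ⟨j, Finset.mem_univ j, hj⟩
  have hσsum : ∑ i, sortVec v' i < ∑ i, sortVec v i := by
    rw [sum_sortVec, sum_sortVec]; exact hsum
  have hd : 0 < d := j.pos
  -- the last Lorenz coordinate is the total sum
  have hlast : ∀ w : Fin d → ℝ, lorenzVec w ⟨d - 1, Nat.sub_lt hd one_pos⟩ = ∑ i, sortVec w i := by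
    intro w
    unfold lorenzVec
    congr 1
    ext i
    simp [Finset.mem_Iic, Fin.le_def, Nat.le_sub_one_of_lt i.2]
  have hLlast : lorenzVec v' ⟨d - 1, Nat.sub_lt hd one_pos⟩ <
      lorenzVec v ⟨d - 1, Nat.sub_lt hd one_pos⟩ := by
    rw [hlast, hlast]; exact hσsum
  have hLsum : ∑ k, lorenzVec v' k < ∑ k, lorenzVec v k :=
    Finset.sum_lt_sum (fun k _ => hL k) ⟨_, Finset.mem_univ _, hLlast⟩
  constructor
  · intro k
    have h1 : l * sortVec v' k ≤ l * sortVec v k := mul_le_mul_of_nonneg_left (hσ k) hl0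
    have h2 : (1 - l) * lorenzVec v' k ≤ (1 - l) * lorenzVec v k :=
      mul_le_mul_of_nonneg_left (hL k) (by linarith)
    simpa using add_le_add h1 h2
  · intro heq
    have hsum' : ∑ k, (l * sortVec v k + (1 - l) * lorenzVec v k) =
        ∑ k, (l * sortVec v' k + (1 - l) * lorenzVec v' k) := by
      rw [← heq]
    rw [Finset.sum_add_distrib, Finset.sum_add_distrib, ← Finset.mul_sum, ← Finset.mul_sum,
      ← Finset.mul_sum, ← Finset.mul_sum] at hsum'
    rcases lt_or_eq_of_le hl0 with hpos | hzero
    · nlinarith [mul_le_mul_of_nonneg_left hLsum.le (sub_nonneg.2 hl1),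
        mul_lt_mul_of_pos_left hσsum hpos]
    · rw [← hzero] at hsum'
      simp at hsum'
      linarith
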